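/- arXiv:1302.0753 — 2 statements merged into one kernel-verified Lean document; each statement's English description precedes it below -/
import Mathlib

section
/- Differential LANSIT: Define the distribution P_B on branching nodes by P_B(j) = Q_j / E[w(L)]. Then for any real-valued node function f, (E[f(L)] - f(0)) / E[w(L)] = Σ_{j∈B} P_B(j) · E[f(S_j) - f(j)]. -/
/-- A finite rooted tree with data of type `α` at the leaves. -/
inductive PTree (α : Type) : Type where
  | leaf (a : α) : PTree α
  | node (n : ℕ) (children : Fin n → PTree α) : PTree α

namespace PTree

/-- Node probability `Q_j`: sum of the probabilities of the leaves below the node. -/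
def Q {α : Type} (pr : α → ℝ) : PTree α → ℝ
  | .leaf a => pr a
  | .node n c => ∑ k : Fin n, Q pr (c k)

/-- All leaf probabilities are positive and every branching node has at least one
successor (so all node probabilities `Q_j` are positive). -/
def pos {α : Type} (pr : α → ℝ) : PTree α → Prop
  | .leaf a => 0 < pr a
  | .node n c => 0 < n ∧ ∀ k : Fin n, pos pr (c k)

/-- Expected value `E[f(L)]` over the leaves; nodes are identified by their
address (list of child indices from the root). -/
def leafExp {α : Type} (pr : α → ℝ) (f : List ℕ → ℝ) : PTree α → List ℕ → ℝ
  | .leaf a, addr => pr a * f addr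
  | .node n c, addr => ∑ k : Fin n, leafExp pr f (c k) (addr ++ [k.val])

/-- `Σ_{j∈B} P_B(j) · E[f(S_j) - f(j)]` with `P_B(j) = Q_j / W`. -/
noncomputable def branchSumNorm {α : Type} (pr : α → ℝ) (W : ℝ) (f : List ℕ → ℝ) :
    PTree α → List ℕ → ℝ
  | .leaf _, _ => 0
  | .node n c, addr =>
      (Q pr (.node n c) / W) *
        (∑ k : Fin n, (Q pr (c k) / Q pr (.node n c)) * (f (addr ++ [k.val]) - f addr))
      + ∑ k : Fin n, branchSumNorm pr W f (c k) (addr ++ [k.val])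
  termination_by structural t _ => t


lemma Q_pos {α : Type} (pr : α → ℝ) : ∀ t : PTree α, pos pr t → 0 < Q pr t
  | .leaf a, h => h
  | .node n c, h => by
    simp only [Q]
    have := h.1
    exact Finset.sum_pos (fun k _ => Q_pos pr (c k) (h.2 k)) (by simpa [Finset.univ_nonempty_iff] using Fin.pos_iff_nonempty.mp h.1)

lemma key {α : Type} (pr : α → ℝ) (W : ℝ) (hWne : W ≠ 0) (f : List ℕ → ℝ) :
    ∀ (t : PTree α), pos pr t → ∀ addr,
      W * branchSumNorm pr W f t addr = leafExp pr f t addr - Q pr t * f addr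
  | .leaf a, _, addr => by
    show W * 0 = pr a * f addr - pr a * f addr
    ring
  | .node n c, h, addr => by
    have hQpos : ∀ k : Fin n, 0 < Q pr (c k) := fun k => Q_pos pr (c k) (h.2 k)
    have hQn : (0:ℝ) < Q pr (.node n c) := Q_pos pr _ h
    rw [branchSumNorm.eq_2, leafExp, mul_add]
    have hrec : ∀ k : Fin n, W * branchSumNorm pr W f (c k) (addr ++ [k.val])
        = leafExp pr f (c k) (addr ++ [k.val]) - Q pr (c k) * f (addr ++ [k.val]) :=
      fun k => key pr W hWne f (c k) (h.2 k) _
    have h2 : W * ∑ k : Fin n, branchSumNorm pr W f (c k) (addr ++ [k.val])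
        = (∑ k : Fin n, leafExp pr f (c k) (addr ++ [k.val]))
          - ∑ k : Fin n, Q pr (c k) * f (addr ++ [k.val]) := by
      rw [Finset.mul_sum]
      simp only [hrec]
      rw [Finset.sum_sub_distrib]
    rw [h2]
    have h1 : W * (Q pr (.node n c) / W *
        ∑ k : Fin n, Q pr (c k) / Q pr (.node n c) * (f (addr ++ [k.val]) - f addr))
        = ∑ k : Fin n, Q pr (c k) * (f (addr ++ [k.val]) - f addr) := by
      rw [show W * (Q pr (.node n c) / W * ∑ k : Fin n, Q pr (c k) / Q pr (.node n c) * (f (addr ++ [k.val]) - f addr)) = Q pr (.node n c) * ∑ k : Fin n, Q pr (c k) / Q pr (.node n c) * (f (addr ++ [k.val]) - f addr) by field_simp]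
      rw [Finset.mul_sum]
      refine Finset.sum_congr rfl fun k _ => ?_
      field_simp
    rw [h1]
    rw [show Q pr (.node n c) = ∑ k : Fin n, Q pr (c k) from rfl, Finset.sum_mul]
    simp only [mul_sub]
    rw [Finset.sum_sub_distrib]
    abel

/-- Differential LANSIT: `(E[f(L)] - f(0)) / E[w(L)] = Σ_{j∈B} P_B(j) · E[f(S_j) - f(j)]`
with `P_B(j) = Q_j / E[w(L)]`. -/
theorem differential_lansit {α : Type} (pr : α → ℝ) (t : PTree α)
    (hpos : pos pr t) (hQ : Q pr t = 1)
    (hW : 0 < leafExp pr (fun addr => (addr.length : ℝ)) t [])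
    (f : List ℕ → ℝ) :
    (leafExp pr f t [] - f []) / leafExp pr (fun addr => (addr.length : ℝ)) t []
      = branchSumNorm pr (leafExp pr (fun addr => (addr.length : ℝ)) t []) f t [] := by
  set W := leafExp pr (fun addr => (addr.length : ℝ)) t [] with hWdef
  have hk := key pr W (ne_of_gt hW) f t hpos []
  rw [hQ, one_mul] at hk
  rw [div_eq_iff (ne_of_gt hW)]
  linarith [hk]

end PTree
end

section
/- Convergence of entropy rate under vanishing normalized divergence (fixed-length case): Let P* be a distribution with full support on a finite alphabet X, and for each n let P_{X^n} be a distribution on X^n. If D(P_{X^n} ‖ (P*)^n)/n → 0 as n → ∞, then H(P_{X^n})/n → H(P*). -/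
open Finset Filter

/-- Entropy (in bits) of a distribution on a finite alphabet, with `0 log 0 = 0`. -/
noncomputable def Hent {X : Type*} [Fintype X] (P : X → ℝ) : ℝ :=
  -∑ a, P a * Real.logb 2 (P a)

/-- Informational divergence (in bits), with `0 log(0/q) = 0`. -/
noncomputable def Dkl {X : Type*} [Fintype X] (P Q : X → ℝ) : ℝ :=
  ∑ a, P a * Real.logb 2 (P a / Q a)

/-- A probability distribution on a finite alphabet. -/
def IsDist {X : Type*} [Fintype X] (P : X → ℝ) : Prop := (∀ a, 0 ≤ P a) ∧ ∑ a, P a = 1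


/- #### Auxiliary lemmas -/

lemma aux_sub_le_mul_log {p q : ℝ} (hp : 0 ≤ p) (hq : 0 ≤ q) (h : q = 0 → p = 0) :
    p - q ≤ p * Real.log (p / q) := by
  rcases hp.eq_or_lt with h0 | h0
  · simp [← h0]; linarith
  · have hq0 : 0 < q := by
      rcases hq.eq_or_lt with hq' | hq'
      · exact absurd (h hq'.symm) (ne_of_gt h0)
      · exact hq'
    have hlog := Real.log_le_sub_one_of_pos (div_pos hq0 h0)
    have hrw : Real.log (q / p) = - Real.log (p / q) := by
      rw [← Real.log_inv]
      congr 1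
      field_simp
    rw [hrw] at hlog
    have h1 : 1 - q / p ≤ Real.log (p / q) := by linarith
    have h2 : p * (1 - q / p) ≤ p * Real.log (p / q) :=
      mul_le_mul_of_nonneg_left h1 h0.le
    have h3 : p * (1 - q / p) = p - q := by field_simp
    linarith

lemma aux_Dkl_nonneg {X : Type*} [Fintype X] {P Q : X → ℝ}
    (hP0 : ∀ a, 0 ≤ P a) (hP1 : ∑ a, P a = 1)
    (hQ0 : ∀ a, 0 ≤ Q a) (hQ1 : ∑ a, Q a = 1)
    (habs : ∀ a, Q a = 0 → P a = 0) :
    0 ≤ Dkl P Q := by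
  have hlog : 0 ≤ ∑ a, P a * Real.log (P a / Q a) := by
    have h := Finset.sum_le_sum (fun a (_ : a ∈ Finset.univ) =>
      aux_sub_le_mul_log (hP0 a) (hQ0 a) (habs a))
    rw [Finset.sum_sub_distrib, hP1, hQ1] at h
    linarith
  have : Dkl P Q = (∑ a, P a * Real.log (P a / Q a)) / Real.log 2 := by
    unfold Dkl
    rw [Finset.sum_div]
    refine Finset.sum_congr rfl fun a _ => ?_
    rw [Real.logb, mul_div_assoc]
  rw [this]
  positivity

lemma aux_quad {q p : ℝ} (hq0 : 0 < q) (hq1 : q ≤ 1) (hp0 : 0 ≤ p) (hp1 : p ≤ 1) :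
    (p - q) ^ 2 / 2 ≤ p * Real.log (p / q) - p + q := by
  rcases hp0.eq_or_lt with h0 | h0
  · rw [← h0]; simp; nlinarith
  set F : ℝ → ℝ := fun x =>
    x * Real.log x - x * Real.log q - x + q - (x - q) ^ 2 / 2 with hFdef
  have hFq : F q = 0 := by simp [hFdef]
  have hderiv : ∀ x : ℝ, 0 < x →
      HasDerivAt F (Real.log x - Real.log q - x + q) x := by
    intro x hx
    have h1 : HasDerivAt (fun y : ℝ => y * Real.log y) (Real.log x + 1) x :=
      Real.hasDerivAt_mul_log (ne_of_gt hx)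
    have h2 : HasDerivAt (fun y : ℝ => y * Real.log q) (1 * Real.log q) x :=
      (hasDerivAt_id x).mul_const _
    have h3 : HasDerivAt (fun y : ℝ => (y - q) ^ 2 / 2) ((↑2 * (x - q) ^ 1 * 1) / 2) x :=
      (((hasDerivAt_id x).sub_const q).pow 2).div_const 2
    have h4 := (((h1.sub h2).sub (hasDerivAt_id x)).add_const q).sub h3
    exact h4.congr_deriv (by ring)
  -- sign of the derivative
  have hderivsgn_pos : ∀ x : ℝ, q ≤ x → x ≤ 1 → 0 ≤ Real.log x - Real.log q - x + q := by
    intro x hxq hx1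
    have hx0 : 0 < x := lt_of_lt_of_le hq0 hxq
    have hL : Real.log (q / x) ≤ q / x - 1 := Real.log_le_sub_one_of_pos (by positivity)
    have hLrw : Real.log (q / x) = Real.log q - Real.log x := Real.log_div hq0.ne' hx0.ne'
    have hu : 0 ≤ Real.log x - Real.log q := by
      have := Real.log_le_log hq0 hxq
      linarith
    -- x * (log q - log x) ≤ q - x
    have hL' : x * (Real.log q - Real.log x) ≤ q - x := by
      have := mul_le_mul_of_nonneg_left (hLrw ▸ hL) hx0.le
      calc x * (Real.log q - Real.log x) ≤ x * (q / x - 1) := this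
        _ = q - x := by field_simp
    nlinarith [mul_nonneg hu (sub_nonneg.mpr hx1)]
  have hderivsgn_neg : ∀ x : ℝ, 0 < x → x ≤ q → Real.log x - Real.log q - x + q ≤ 0 := by
    intro x hx0 hxq
    have hL : Real.log (x / q) ≤ x / q - 1 := Real.log_le_sub_one_of_pos (by positivity)
    have hLrw : Real.log (x / q) = Real.log x - Real.log q := Real.log_div hx0.ne' hq0.ne'
    have hu : Real.log x - Real.log q ≤ 0 := by
      have := Real.log_le_log hx0 hxq
      linarith
    have hL' : q * (Real.log x - Real.log q) ≤ x - q := by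
      have := mul_le_mul_of_nonneg_left (hLrw ▸ hL) hq0.le
      calc q * (Real.log x - Real.log q) ≤ q * (x / q - 1) := this
        _ = x - q := by field_simp
    nlinarith [mul_nonneg (neg_nonneg.mpr hu) (sub_nonneg.mpr hq1)]
  have hcont : Continuous F := by
    apply Continuous.sub
    apply Continuous.add
    apply Continuous.sub
    apply Continuous.sub
    · exact Real.continuous_mul_log
    · exact continuous_id.mul continuous_const
    · exact continuous_id
    · exact continuous_const
    · exact ((continuous_id.sub continuous_const).pow 2).div_const 2
  have hFnonneg : 0 ≤ F p := by
    rcases le_total q p with hqp | hpq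
    · have hm : MonotoneOn F (Set.Icc q p) := by
        apply monotoneOn_of_deriv_nonneg (convex_Icc q p) hcont.continuousOn
        · intro x hx
          rw [interior_Icc] at hx
          exact ((hderiv x (lt_trans hq0 hx.1)).differentiableAt).differentiableWithinAt
        · intro x hx
          rw [interior_Icc] at hx
          rw [(hderiv x (lt_trans hq0 hx.1)).deriv]
          exact hderivsgn_pos x hx.1.le (hx.2.le.trans hp1)
      have := hm (Set.mem_Icc.mpr ⟨le_rfl, hqp⟩) (Set.mem_Icc.mpr ⟨hqp, le_rfl⟩) hqp
      linarith [hFq ▸ this]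
    · have hm : AntitoneOn F (Set.Icc p q) := by
        apply antitoneOn_of_deriv_nonpos (convex_Icc p q) hcont.continuousOn
        · intro x hx
          rw [interior_Icc] at hx
          exact ((hderiv x (lt_trans h0 hx.1)).differentiableAt).differentiableWithinAt
        · intro x hx
          rw [interior_Icc] at hx
          rw [(hderiv x (lt_trans h0 hx.1)).deriv]
          exact hderivsgn_neg x (lt_trans h0 hx.1) hx.2.le
      have := hm (Set.mem_Icc.mpr ⟨le_rfl, hpq⟩) (Set.mem_Icc.mpr ⟨hpq, le_rfl⟩) hpq
      linarith [hFq ▸ this]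
  have hlogdiv : Real.log (p / q) = Real.log p - Real.log q := Real.log_div h0.ne' hq0.ne'
  rw [hlogdiv]
  simp only [hFdef] at hFnonneg
  nlinarith [hFnonneg]

lemma aux_key {X : Type} [Fintype X] (Pstar : X → ℝ) (hPstar : IsDist Pstar)
    (hfull : ∀ a, 0 < Pstar a) {n : ℕ} (hn : 0 < n)
    (Pn : (Fin n → X) → ℝ) (hPn : IsDist Pn) :
    |Hent Pn / n - Hent Pstar| ≤
      Dkl Pn (fun x : Fin n → X => ∏ k, Pstar (x k)) / n +
      Real.sqrt ((2 * Real.log 2 * ∑ a, (Real.logb 2 (Pstar a)) ^ 2) *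
        (Dkl Pn (fun x : Fin n → X => ∏ k, Pstar (x k)) / n)) := by
  classical
  obtain ⟨hPn0, hPn1⟩ := hPn
  obtain ⟨hPs0, hPs1⟩ := hPstar
  have hn0 : (0 : ℝ) < n := by exact_mod_cast hn
  have hle1 : ∀ (f : X → ℝ), (∀ a, 0 ≤ f a) → (∑ a, f a = 1) → ∀ a, f a ≤ 1 := by
    intro f h0 h1 a
    have := Finset.single_le_sum (f := f) (fun b _ => h0 b) (Finset.mem_univ a)
    linarith
  have hPs_le1 := hle1 Pstar hPs0 hPs1
  set Q : (Fin n → X) → ℝ := fun x => ∏ k, Pstar (x k) with hQdef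
  have hQpos : ∀ x, 0 < Q x := fun x => Finset.prod_pos fun k _ => hfull _
  have hQ1 : ∑ x, Q x = 1 := by
    rw [hQdef, ← Fintype.prod_sum (f := fun _ : Fin n => Pstar)]
    simp [hPs1]
  set R : Fin n → X → ℝ := fun k a => ∑ x, if x k = a then Pn x else 0 with hRdef
  have hR0 : ∀ k a, 0 ≤ R k a := by
    intro k a
    exact Finset.sum_nonneg fun x _ => by by_cases h : x k = a <;> simp [h, hPn0 x]
  have hRle : ∀ (k : Fin n) (x : Fin n → X), Pn x ≤ R k (x k) := by
    intro k x
    have := Finset.single_le_sum (f := fun x' => if x' k = x k then Pn x' else 0)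
      (fun x' _ => by by_cases h : x' k = x k <;> simp [h, hPn0 x']) (Finset.mem_univ x)
    simpa using this
  have hR1 : ∀ k, ∑ a, R k a = 1 := by
    intro k
    rw [hRdef]
    rw [Finset.sum_comm]
    simp only [Finset.sum_ite_eq, Finset.mem_univ, if_true]
    exact hPn1
  have hRle1 : ∀ k a, R k a ≤ 1 := fun k => hle1 (R k) (hR0 k) (hR1 k)
  have hmarg : ∀ (k : Fin n) (g : X → ℝ),
      ∑ a, R k a * g a = ∑ x, Pn x * g (x k) := by
    intro k g
    simp only [hRdef, Finset.sum_mul, ite_mul, zero_mul]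
    rw [Finset.sum_comm]
    refine Finset.sum_congr rfl fun x _ => ?_
    simp [Finset.sum_ite_eq]
  have hsplit : ∀ (p u v : ℝ), (p ≠ 0 → 0 < u ∧ 0 < v) →
      p * Real.logb 2 (u / v) = p * Real.logb 2 u - p * Real.logb 2 v := by
    intro p u v h
    rcases eq_or_ne p 0 with rfl | hp0
    · simp
    · obtain ⟨hu, hv⟩ := h hp0
      rw [Real.logb_div hu.ne' hv.ne', mul_sub]
  -- cross-entropy identity
  have hDn : Dkl Pn Q = -Hent Pn - ∑ x, Pn x * Real.logb 2 (Q x) := by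
    unfold Dkl Hent
    have h1 : ∀ x ∈ Finset.univ, Pn x * Real.logb 2 (Pn x / Q x)
        = Pn x * Real.logb 2 (Pn x) - Pn x * Real.logb 2 (Q x) :=
      fun x _ => hsplit _ _ _ (fun hp => ⟨(hPn0 x).lt_of_ne' hp, hQpos x⟩)
    rw [Finset.sum_congr rfl h1, Finset.sum_sub_distrib]
    ring
  have hcross : ∑ x, Pn x * Real.logb 2 (Q x)
      = ∑ k : Fin n, ∑ a, R k a * Real.logb 2 (Pstar a) := by
    calc ∑ x, Pn x * Real.logb 2 (Q x)
        = ∑ x, ∑ k, Pn x * Real.logb 2 (Pstar (x k)) := by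
          refine Finset.sum_congr rfl fun x _ => ?_
          rw [hQdef, Real.logb_prod _ _ (fun k _ => (hfull _).ne'), Finset.mul_sum]
      _ = ∑ k, ∑ x, Pn x * Real.logb 2 (Pstar (x k)) := Finset.sum_comm
      _ = ∑ k, ∑ a, R k a * Real.logb 2 (Pstar a) := by
          exact Finset.sum_congr rfl fun k _ =>
            (hmarg k (fun a => Real.logb 2 (Pstar a))).symm
  -- the product of marginals
  set M : (Fin n → X) → ℝ := fun x => ∏ k, R k (x k) with hMdef
  have hM0 : ∀ x, 0 ≤ M x := fun x => Finset.prod_nonneg fun k _ => hR0 k _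
  have hM1 : ∑ x, M x = 1 := by
    rw [hMdef, ← Fintype.prod_sum (f := R)]
    simp [hR1]
  have hMpos : ∀ x, Pn x ≠ 0 → 0 < M x := by
    intro x hx
    exact Finset.prod_pos fun k _ => lt_of_lt_of_le ((hPn0 x).lt_of_ne' hx) (hRle k x)
  have habsM : ∀ x, M x = 0 → Pn x = 0 := by
    intro x hx
    by_contra h
    exact absurd hx (hMpos x h).ne'
  have hDM : Dkl Pn M = -Hent Pn - ∑ k : Fin n, ∑ a, R k a * Real.logb 2 (R k a) := by
    unfold Dkl Hent
    have h1 : ∀ x ∈ Finset.univ, Pn x * Real.logb 2 (Pn x / M x)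
        = Pn x * Real.logb 2 (Pn x) - Pn x * Real.logb 2 (M x) :=
      fun x _ => hsplit _ _ _ (fun hp => ⟨(hPn0 x).lt_of_ne' hp, hMpos x hp⟩)
    rw [Finset.sum_congr rfl h1, Finset.sum_sub_distrib]
    have h2 : ∑ x, Pn x * Real.logb 2 (M x)
        = ∑ k : Fin n, ∑ a, R k a * Real.logb 2 (R k a) := by
      have h3 : ∀ x ∈ Finset.univ, Pn x * Real.logb 2 (M x)
          = ∑ k, Pn x * Real.logb 2 (R k (x k)) := by
        intro x _
        rcases eq_or_ne (Pn x) 0 with h | h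
        · simp [h]
        · have hne : ∀ k ∈ Finset.univ, R k (x k) ≠ 0 :=
            fun k _ => (lt_of_lt_of_le ((hPn0 x).lt_of_ne' h) (hRle k x)).ne'
          rw [hMdef, Real.logb_prod _ _ hne, Finset.mul_sum]
      rw [Finset.sum_congr rfl h3, Finset.sum_comm]
      exact Finset.sum_congr rfl fun k _ =>
        (hmarg k (fun a => Real.logb 2 (R k a))).symm
    rw [h2]
    ring
  have hDkid : ∀ k, Dkl (R k) Pstar
      = ∑ a, R k a * Real.logb 2 (R k a) - ∑ a, R k a * Real.logb 2 (Pstar a) := by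
    intro k
    unfold Dkl
    rw [← Finset.sum_sub_distrib]
    exact Finset.sum_congr rfl fun a _ =>
      hsplit _ _ _ (fun hp => ⟨(hR0 k a).lt_of_ne' hp, hfull a⟩)
  have hMnn : 0 ≤ Dkl Pn M := aux_Dkl_nonneg hPn0 hPn1 hM0 hM1 habsM
  have hsuper : ∑ k : Fin n, Dkl (R k) Pstar ≤ Dkl Pn Q := by
    have hid : ∑ k : Fin n, Dkl (R k) Pstar = Dkl Pn Q - Dkl Pn M := by
      have h1 : ∑ k : Fin n, Dkl (R k) Pstar
          = (∑ k : Fin n, ∑ a, R k a * Real.logb 2 (R k a))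
            - ∑ k : Fin n, ∑ a, R k a * Real.logb 2 (Pstar a) := by
        rw [← Finset.sum_sub_distrib]
        exact Finset.sum_congr rfl fun k _ => hDkid k
      rw [h1, hDn, hDM, hcross]
      ring
    linarith
  have hDknn : ∀ k, 0 ≤ Dkl (R k) Pstar := fun k =>
    aux_Dkl_nonneg (hR0 k) (hR1 k) (fun a => (hfull a).le) hPs1
      (fun a ha => absurd ha (hfull a).ne')
  have hDnn : 0 ≤ Dkl Pn Q :=
    aux_Dkl_nonneg hPn0 hPn1 (fun x => (hQpos x).le) hQ1
      (fun x hx => absurd hx (hQpos x).ne')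
  -- Pinsker-type bound per coordinate
  set C0 : ℝ := ∑ a, (Real.logb 2 (Pstar a)) ^ 2 with hC0def
  have hC0 : 0 ≤ C0 := Finset.sum_nonneg fun a _ => sq_nonneg _
  set eps : Fin n → ℝ := fun k => ∑ a, (R k a - Pstar a) * Real.logb 2 (Pstar a) with hepsdef
  have hlog2 : Real.log 2 ≠ 0 := (Real.log_pos (by norm_num)).ne'
  have hlb : ∀ t : ℝ, Real.log t = Real.logb 2 t * Real.log 2 := by
    intro t
    rw [Real.logb, div_mul_cancel₀ _ hlog2]
  have hpin : ∀ k, (eps k) ^ 2 ≤ (2 * Real.log 2 * Dkl (R k) Pstar) * C0 := by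
    intro k
    have hcs := Finset.sum_mul_sq_le_sq_mul_sq Finset.univ
      (fun a => R k a - Pstar a) (fun a => Real.logb 2 (Pstar a))
    have hsq : ∑ a, (R k a - Pstar a) ^ 2 ≤ 2 * Real.log 2 * Dkl (R k) Pstar := by
      have h1 : ∀ a ∈ Finset.univ, (R k a - Pstar a) ^ 2 / 2
          ≤ R k a * Real.log (R k a / Pstar a) - R k a + Pstar a :=
        fun a _ => aux_quad (hfull a) (hPs_le1 a) (hR0 k a) (hRle1 k a)
      have h2 := Finset.sum_le_sum h1
      have h3 : ∑ a, (R k a * Real.log (R k a / Pstar a) - R k a + Pstar a)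
          = Real.log 2 * Dkl (R k) Pstar := by
        rw [Finset.sum_add_distrib, Finset.sum_sub_distrib, hR1 k, hPs1]
        unfold Dkl
        rw [Finset.mul_sum]
        have h4 : ∀ a ∈ Finset.univ, R k a * Real.log (R k a / Pstar a)
            = Real.log 2 * (R k a * Real.logb 2 (R k a / Pstar a)) := by
          intro a _
          rw [hlb (R k a / Pstar a)]
          ring
        rw [Finset.sum_congr rfl h4]
        ring
      have h5 : ∑ a, (R k a - Pstar a) ^ 2 / 2
          ≤ Real.log 2 * Dkl (R k) Pstar := h3 ▸ h2
      rw [← Finset.sum_div] at h5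
      linarith
    calc (eps k) ^ 2 ≤ (∑ a, (R k a - Pstar a) ^ 2) * C0 := hcs
      _ ≤ (2 * Real.log 2 * Dkl (R k) Pstar) * C0 :=
          mul_le_mul_of_nonneg_right hsq hC0
  have hcs2 : (∑ k, eps k) ^ 2 ≤ n * ∑ k, (eps k) ^ 2 := by
    have := sq_sum_le_card_mul_sum_sq (s := Finset.univ) (f := eps)
    simpa using this
  set C1 : ℝ := 2 * Real.log 2 * C0 with hC1def
  have hC1 : 0 ≤ C1 := by
    have : (0:ℝ) < Real.log 2 := Real.log_pos (by norm_num)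
    positivity
  have hEbound : |(∑ k, eps k) / n| ≤ Real.sqrt (C1 * (Dkl Pn Q / n)) := by
    apply Real.abs_le_sqrt
    rw [div_pow, div_le_iff₀ (by positivity)]
    calc (∑ k, eps k) ^ 2 ≤ n * ∑ k, (eps k) ^ 2 := hcs2
      _ ≤ n * (C1 * ∑ k, Dkl (R k) Pstar) := by
          apply mul_le_mul_of_nonneg_left _ hn0.le
          calc ∑ k, (eps k) ^ 2
              ≤ ∑ k, (2 * Real.log 2 * Dkl (R k) Pstar) * C0 :=
                Finset.sum_le_sum fun k _ => hpin k
            _ = C1 * ∑ k, Dkl (R k) Pstar := by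
                rw [Finset.mul_sum]
                exact Finset.sum_congr rfl fun k _ => by rw [hC1def]; ring
      _ ≤ n * (C1 * Dkl Pn Q) := by
          exact mul_le_mul_of_nonneg_left (mul_le_mul_of_nonneg_left hsuper hC1) hn0.le
      _ = C1 * (Dkl Pn Q / n) * (n:ℝ) ^ 2 := by
          field_simp
  -- main identity
  have hRP : ∀ k, ∑ a, R k a * Real.logb 2 (Pstar a) = eps k - Hent Pstar := by
    intro k
    have h1 : eps k = (∑ a, R k a * Real.logb 2 (Pstar a))
        - ∑ a, Pstar a * Real.logb 2 (Pstar a) := by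
      rw [hepsdef, ← Finset.sum_sub_distrib]
      exact Finset.sum_congr rfl fun a _ => by ring
    unfold Hent
    linarith
  have hmain : Hent Pn = n * Hent Pstar - Dkl Pn Q - ∑ k, eps k := by
    have hcross' : ∑ x, Pn x * Real.logb 2 (Q x) = (∑ k, eps k) - n * Hent Pstar := by
      rw [hcross, Finset.sum_congr rfl fun k _ => hRP k, Finset.sum_sub_distrib]
      simp [Finset.card_univ]
    rw [hcross'] at hDn
    linarith
  have hfinal : Hent Pn / n - Hent Pstar = -(Dkl Pn Q / n) - (∑ k, eps k) / n := by
    rw [hmain]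
    field_simp
    ring
  rw [hfinal]
  have h2 : 0 ≤ Dkl Pn Q / n := by positivity
  calc |-(Dkl Pn Q / n) - (∑ k, eps k) / n|
      = |Dkl Pn Q / n + (∑ k, eps k) / n| := by
        rw [← abs_neg]
        ring_nf
    _ ≤ |Dkl Pn Q / n| + |(∑ k, eps k) / n| := abs_add_le _ _
    _ ≤ Dkl Pn Q / n + Real.sqrt (C1 * (Dkl Pn Q / n)) := by
        rw [abs_of_nonneg h2]
        exact add_le_add_right hEbound _

/-- Convergence of the entropy rate: if the normalized divergence to the i.i.d.
product distribution vanishes, then the entropy rate converges to `H(P*)`. -/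
theorem entropy_rate_convergence {X : Type} [Fintype X]
    (Pstar : X → ℝ) (hPstar : IsDist Pstar) (hfull : ∀ a, 0 < Pstar a)
    (P : (n : ℕ) → (Fin n → X) → ℝ) (hP : ∀ n, IsDist (P n))
    (hdiv : Tendsto
      (fun n : ℕ => Dkl (P n) (fun x : Fin n → X => ∏ k, Pstar (x k)) / n)
      atTop (nhds 0)) :
    Tendsto (fun n : ℕ => Hent (P n) / n) atTop (nhds (Hent Pstar)) := by
  set C1 : ℝ := 2 * Real.log 2 * ∑ a, (Real.logb 2 (Pstar a)) ^ 2 with hC1def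
  set d : ℕ → ℝ :=
    fun n => Dkl (P n) (fun x : Fin n → X => ∏ k, Pstar (x k)) / n with hddef
  have hb : ∀ᶠ n in atTop,
      ‖Hent (P n) / (n : ℝ) - Hent Pstar‖ ≤ d n + Real.sqrt (C1 * d n) := by
    filter_upwards [eventually_gt_atTop 0] with n hn
    have := aux_key Pstar hPstar hfull hn (P n) (hP n)
    simpa [Real.norm_eq_abs, hddef, hC1def] using this
  have hlim : Tendsto (fun n => d n + Real.sqrt (C1 * d n)) atTop (nhds 0) := by
    have h1 : Tendsto (fun n => C1 * d n) atTop (nhds (C1 * 0)) := hdiv.const_mul C1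
    rw [mul_zero] at h1
    have h2 : Tendsto (fun n => Real.sqrt (C1 * d n)) atTop (nhds 0) := by
      have := (Real.continuous_sqrt.tendsto 0).comp h1
      simpa [Function.comp_def] using this
    simpa using hdiv.add h2
  have h0 : Tendsto (fun n : ℕ => Hent (P n) / n - Hent Pstar) atTop (nhds 0) :=
    squeeze_zero_norm' hb hlim
  have := h0.add (tendsto_const_nhds (x := Hent Pstar) (f := atTop))
  simpa using this
end
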